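/- If a topological cluster of the network ẋ = -Lx has incoming edges from other topological clusters, then those incoming edges must originate from at least two distinct topological clusters; if all incoming edges into a set S satisfying conditions (C1) and (C2) originate from a single topological cluster T, then S ∪ T-side nodes form a larger set in the same topological cluster, so S is not maximal. -/

import Mathlib

/-- Conditions (C1) and (C2): `G[S]` has a directed spanning tree, and either no
node of `S`, or exactly one node of `S` which is a root of `G[S]`, has incoming
edges from outside `S`. -/
def SatC1C2 {V : Type*} (E : V → V → Prop) (S : Set V) : Prop :=
  (∃ r ∈ S, ∀ j ∈ S,
    Relation.ReflTransGen (fun a b => a ∈ S ∧ b ∈ S ∧ E a b) r j) ∧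
  ((∀ i ∈ S, ∀ j ∉ S, ¬ E j i) ∨
    ∃ r ∈ S,
      (∀ j ∈ S, Relation.ReflTransGen (fun a b => a ∈ S ∧ b ∈ S ∧ E a b) r j) ∧
      (∃ j ∉ S, E j r) ∧
      ∀ i ∈ S, (∃ j ∉ S, E j i) → i = r)

/-- A topological cluster, by the characterization theorem: a nonempty maximal
set satisfying (C1) and (C2). -/
def TopCluster {V : Type*} (E : V → V → Prop) (S : Set V) : Prop :=
  S.Nonempty ∧ SatC1C2 E S ∧ ∀ S' : Set V, S ⊆ S' → SatC1C2 E S' → S' = S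

/-- `v` is the cluster-root (CR) node of cluster `S`: it belongs to `S` and is
either a leader node (no incoming edges in `G`) or a root of `G[S]` having
incoming edges from outside `S`. -/
def IsCR {V : Type*} (E : V → V → Prop) (S : Set V) (v : V) : Prop :=
  v ∈ S ∧ ((∀ j, ¬ E j v) ∨
    ((∀ j ∈ S, Relation.ReflTransGen (fun a b => a ∈ S ∧ b ∈ S ∧ E a b) v j) ∧
      ∃ j ∉ S, E j v))

/-- The graph has no leader-like strongly connected component: no nonempty,
internally strongly connected node set containing an edge and receiving no
incoming edge from outside. -/
def NoLSCC {V : Type*} (E : V → V → Prop) : Prop :=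
  ¬ ∃ S : Set V,
    (∃ a ∈ S, ∃ b ∈ S, E a b) ∧
    (∀ a ∈ S, ∀ b ∈ S,
      Relation.ReflTransGen (fun x y => x ∈ S ∧ y ∈ S ∧ E x y) a b) ∧
    (∀ i ∈ S, ∀ j ∉ S, ¬ E j i)

private lemma relMono {V : Type*} {E : V → V → Prop} {S S' : Set V} (h : S ⊆ S')
    {a b : V} (hp : Relation.ReflTransGen (fun a b => a ∈ S ∧ b ∈ S ∧ E a b) a b) :
    Relation.ReflTransGen (fun a b => a ∈ S' ∧ b ∈ S' ∧ E a b) a b :=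
  Relation.ReflTransGen.mono (fun _ _ hx => ⟨h hx.1, h hx.2.1, hx.2.2⟩) _ _ hp

/-- Key lemma: if all incoming edges of `S` come from `T` (and there is one),
then `S ∪ T` satisfies (C1) and (C2). -/
private lemma union_sat {V : Type*} {E : V → V → Prop} {S T : Set V}
    (hS : SatC1C2 E S) (hT : SatC1C2 E T)
    (hin : ∀ i ∈ S, ∀ j, j ∉ S → E j i → j ∈ T)
    (hex : ∃ i ∈ S, ∃ j, j ∉ S ∧ E j i) :
    SatC1C2 E (S ∪ T) := by
  classical
  -- S's C2 must be in the second case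
  obtain ⟨i0, hi0, j0', hj0', hE0⟩ := hex
  rcases hS.2 with hnone | ⟨r, hrS, hrootS, ⟨j0, hj0, hEj0r⟩, huniqS⟩
  · exact absurd hE0 (hnone i0 hi0 j0' hj0')
  have hj0T : j0 ∈ T := hin r hrS j0 hj0 hEj0r
  obtain ⟨rT, hrT, hrootT⟩ := hT.1
  -- from any root of T one can reach everything in S ∪ T
  have reach : ∀ rt ∈ T,
      (∀ j ∈ T, Relation.ReflTransGen (fun a b => a ∈ T ∧ b ∈ T ∧ E a b) rt j) →
      ∀ x ∈ S ∪ T,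
      Relation.ReflTransGen (fun a b => a ∈ S ∪ T ∧ b ∈ S ∪ T ∧ E a b) rt x := by
    intro rt hrt hroot x hx
    rcases hx with hxS | hxT
    · have h1 : Relation.ReflTransGen (fun a b => a ∈ S ∪ T ∧ b ∈ S ∪ T ∧ E a b) rt j0 :=
        relMono Set.subset_union_right (hroot j0 hj0T)
      have h2 := h1.tail (b := j0) (c := r) ⟨Or.inr hj0T, Or.inl hrS, hEj0r⟩
      exact h2.trans (relMono Set.subset_union_left (hrootS x hxS))
    · exact relMono Set.subset_union_right (hroot x hxT)
  refine ⟨⟨rT, Or.inr hrT, reach rT hrT hrootT⟩, ?_⟩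
  rcases hT.2 with hnoneT | ⟨rT', hrT', hrootT', ⟨jT, hjT, hEjT⟩, huniqT⟩
  · -- T has no external incoming edges: neither does S ∪ T
    left
    rintro i (hiS | hiT) j hj hEji
    · exact hj (Or.inr (hin i hiS j (fun h => hj (Or.inl h)) hEji))
    · exact hnoneT i hiT j (fun h => hj (Or.inr h)) hEji
  · by_cases hc : ∃ i ∈ S ∪ T, ∃ j, j ∉ S ∪ T ∧ E j i
    · -- all external incoming edges of S ∪ T land at rT'
      have key : ∀ i ∈ S ∪ T, ∀ j, j ∉ S ∪ T → E j i → i = rT' := by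
        rintro i (hiS | hiT) j hj hEji
        · exact absurd (Or.inr (hin i hiS j (fun h => hj (Or.inl h)) hEji)) hj
        · exact huniqT i hiT ⟨j, fun h => hj (Or.inr h), hEji⟩
      obtain ⟨i1, hi1, j1, hj1, hE1⟩ := hc
      have hi1r : i1 = rT' := key i1 hi1 j1 hj1 hE1
      right
      exact ⟨rT', Or.inr hrT', reach rT' hrT' hrootT',
        ⟨j1, hj1, hi1r ▸ hE1⟩,
        fun i hi ⟨j, hj, hEji⟩ => key i hi j hj hEji⟩
    · left
      intro i hi j hj hEji
      exact hc ⟨i, hi, j, hj, hEji⟩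

/-- Every node is contained in some topological cluster. -/
private lemma exists_cluster {V : Type*} [Fintype V] (E : V → V → Prop) (v : V) :
    ∃ S : Set V, v ∈ S ∧ TopCluster E S := by
  classical
  have hsingle : SatC1C2 E ({v} : Set V) := by
    constructor
    · exact ⟨v, rfl, fun j hj => by rw [Set.mem_singleton_iff] at hj; rw [hj]⟩
    · by_cases h : ∃ j, j ∉ ({v} : Set V) ∧ E j v
      · right
        refine ⟨v, rfl, fun j hj => by rw [Set.mem_singleton_iff] at hj; rw [hj],
          ⟨h.choose, h.choose_spec.1, h.choose_spec.2⟩, ?_⟩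
        intro i hi _
        exact hi
      · left
        intro i hi j hj hEji
        rw [Set.mem_singleton_iff] at hi
        exact h ⟨j, hj, hi ▸ hEji⟩
  -- take an element of maximal cardinality among sets containing v satisfying C1C2
  let P : Set V → Prop := fun S => v ∈ S ∧ SatC1C2 E S
  let F : Finset (Set V) := Finset.univ.filter P
  have hne : F.Nonempty := ⟨{v}, by simp [F, P, hsingle]⟩
  obtain ⟨S, hSF, hSmax⟩ := F.exists_max_image (fun S => S.ncard) hne
  have hSP : P S := (Finset.mem_filter.mp hSF).2
  refine ⟨S, hSP.1, ⟨v, hSP.1⟩, hSP.2, ?_⟩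
  intro S' hsub hS'
  have hS'F : S' ∈ F := Finset.mem_filter.mpr ⟨Finset.mem_univ _, hsub hSP.1, hS'⟩
  have hle : S'.ncard ≤ S.ncard := hSmax S' hS'F
  exact (Set.eq_of_subset_of_ncard_le hsub hle (Set.toFinite S')).symm

/-- (i) If a topological cluster `S` has incoming edges from outside, then these
incoming edges originate from at least two distinct topological clusters.
(ii) If a nonempty set `S` satisfying (C1), (C2) is disjoint from a topological
cluster `T` and all incoming edges into `S` from outside originate in `T` (and
there is at least one such edge), then `S` is not maximal: some strictly larger
set still satisfies (C1) and (C2). -/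
theorem stmt18 {V : Type*} [Fintype V] (E : V → V → Prop) :
    (∀ S : Set V, TopCluster E S → (∃ i ∈ S, ∃ j, j ∉ S ∧ E j i) →
      ∃ T₁ T₂ : Set V, TopCluster E T₁ ∧ TopCluster E T₂ ∧ T₁ ≠ T₂ ∧
        (∃ i ∈ S, ∃ j ∈ T₁, j ∉ S ∧ E j i) ∧
        (∃ i ∈ S, ∃ j ∈ T₂, j ∉ S ∧ E j i)) ∧
    (∀ S T : Set V, S.Nonempty → SatC1C2 E S → TopCluster E T → Disjoint S T →
      (∀ i ∈ S, ∀ j, j ∉ S → E j i → j ∈ T) →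
      (∃ i ∈ S, ∃ j, j ∉ S ∧ E j i) →
      ∃ S' : Set V, S ⊆ S' ∧ S' ≠ S ∧ SatC1C2 E S') := by
  classical
  constructor
  · intro S hS hex
    obtain ⟨hne, hsat, hmax⟩ := hS
    obtain ⟨i0, hi0, j0, hj0, hE0⟩ := hex
    obtain ⟨T₁, hj0T₁, hT₁⟩ := exists_cluster E j0
    by_cases hc : ∃ i ∈ S, ∃ j, j ∉ S ∧ j ∉ T₁ ∧ E j i
    · obtain ⟨i1, hi1, j1, hj1S, hj1T, hE1⟩ := hc
      obtain ⟨T₂, hj1T₂, hT₂⟩ := exists_cluster E j1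
      refine ⟨T₁, T₂, hT₁, hT₂, ?_, ⟨i0, hi0, j0, hj0T₁, hj0, hE0⟩,
        ⟨i1, hi1, j1, hj1T₂, hj1S, hE1⟩⟩
      intro h
      exact hj1T (h ▸ hj1T₂)
    · -- all incoming edges come from T₁ : contradiction with maximality of S
      exfalso
      have hin : ∀ i ∈ S, ∀ j, j ∉ S → E j i → j ∈ T₁ := by
        intro i hi j hjS hEji
        by_contra hjT
        exact hc ⟨i, hi, j, hjS, hjT, hEji⟩
      have hU := union_sat hsat hT₁.2.1 hin ⟨i0, hi0, j0, hj0, hE0⟩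
      have := hmax (S ∪ T₁) Set.subset_union_left hU
      exact hj0 (this ▸ (Or.inr hj0T₁ : j0 ∈ S ∪ T₁))
  · intro S T hSne hsat hT hdisj hin hex
    refine ⟨S ∪ T, Set.subset_union_left, ?_, union_sat hsat hT.2.1 hin hex⟩
    intro h
    obtain ⟨t, ht⟩ := hT.1
    have htS : t ∈ S := h ▸ (Or.inr ht : t ∈ S ∪ T)
    exact hdisj.ne_of_mem htS ht rfl
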